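/- Let the ambient space be an n-dimensional complex inner product space. For every m ≥ 1 and all subspaces p₁, q₁, r₁, …, pₘ, qₘ, rₘ, the iterated restricted distributivity test formula satisfies 2^m · dim(αᵐ(pₘ,qₘ,rₘ)) ≤ n. -/

import Mathlib

/-- The distributivity test formula `α(p,q,r) = (a ⊔ b) ⊓ (aᗮ ⊔ bᗮ)` where
`a = p ⊔ (q ⊓ r)` and `b = (p ⊔ q) ⊓ (p ⊔ r)`. -/
noncomputable def distribTest {E : Type*} [NormedAddCommGroup E] [InnerProductSpace ℂ E]
    (p q r : Submodule ℂ E) : Submodule ℂ E :=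
  ((p ⊔ (q ⊓ r)) ⊔ ((p ⊔ q) ⊓ (p ⊔ r))) ⊓ ((p ⊔ (q ⊓ r))ᗮ ⊔ ((p ⊔ q) ⊓ (p ⊔ r))ᗮ)

/-- The restriction `α|_γ(p,q,r)` of the distributivity test formula to `γ`:
write `α` in negation normal form `((p ⊔ q) ⊓ (p ⊔ r)) ⊓ (pᗮ ⊓ (qᗮ ⊔ rᗮ))` and
replace each variable `x` by `x ⊓ γ` and each negated variable `xᗮ` by `xᗮ ⊓ γ`. -/
noncomputable def distribTestRes {E : Type*} [NormedAddCommGroup E] [InnerProductSpace ℂ E]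
    (γ p q r : Submodule ℂ E) : Submodule ℂ E :=
  (((p ⊓ γ) ⊔ (q ⊓ γ)) ⊓ ((p ⊓ γ) ⊔ (r ⊓ γ))) ⊓ ((pᗮ ⊓ γ) ⊓ ((qᗮ ⊓ γ) ⊔ (rᗮ ⊓ γ)))

/-- The iterated restricted distributivity test formula:
`distribTestIter p q r m` is `α^(m+1)(p (m+1), q (m+1), r (m+1))`, where
`α¹(p₁,q₁,r₁) = α(p₁,q₁,r₁)` and `αᵐ(pₘ,qₘ,rₘ) = α|_(α^(m-1))(pₘ,qₘ,rₘ)`.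
The variables `pⱼ, qⱼ, rⱼ` (for `1 ≤ j ≤ m+1`) are given as `p j, q j, r j`. -/
noncomputable def distribTestIter {E : Type*} [NormedAddCommGroup E] [InnerProductSpace ℂ E]
    (p q r : ℕ → Submodule ℂ E) : ℕ → Submodule ℂ E
  | 0 => distribTest (p 1) (q 1) (r 1)
  | (m + 1) => distribTestRes (distribTestIter p q r m) (p (m + 2)) (q (m + 2)) (r (m + 2))

open Module Submodule

section Aux

variable {E : Type*} [NormedAddCommGroup E] [InnerProductSpace ℂ E] [FiniteDimensional ℂ E]

lemma finrank_inf_orthogonal_add {A B : Submodule ℂ E} (h : A ≤ B) :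
    finrank ℂ (Aᗮ ⊓ B : Submodule ℂ E) + finrank ℂ A = finrank ℂ B := by
  have h1 := Submodule.finrank_sup_add_finrank_inf_eq A (Aᗮ ⊓ B)
  rw [Submodule.sup_orthogonal_inf_of_hasOrthogonalProjection h, ← inf_assoc,
    A.inf_orthogonal_eq_bot, bot_inf_eq, finrank_bot] at h1
  omega

lemma two_mul_finrank_distribTestRes_le' (γ p q r : Submodule ℂ E) :
    2 * finrank ℂ ((((p ⊓ γ) ⊔ (q ⊓ γ)) ⊓ ((p ⊓ γ) ⊔ (r ⊓ γ))) ⊓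
      ((pᗮ ⊓ γ) ⊓ ((qᗮ ⊓ γ) ⊔ (rᗮ ⊓ γ))) : Submodule ℂ E) ≤ finrank ℂ γ := by
  set P := p ⊓ γ with hP
  set Q := q ⊓ γ with hQ
  set R := r ⊓ γ with hR
  set A := P ⊔ Q ⊓ R with hA
  set B := (P ⊔ Q) ⊓ (P ⊔ R) with hB
  have hAB : A ≤ B := sup_le (le_inf le_sup_left le_sup_left)
    (le_inf (le_sup_of_le_right inf_le_left) (le_sup_of_le_right inf_le_right))
  -- the restricted test is contained in Aᗮ ⊓ B
  have hres : B ⊓ ((pᗮ ⊓ γ) ⊓ ((qᗮ ⊓ γ) ⊔ (rᗮ ⊓ γ))) ≤ Aᗮ ⊓ B := by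
    refine le_inf (inf_le_right.trans ?_) inf_le_left
    have h1 : A ≤ p ⊔ q ⊓ r := sup_le (inf_le_left.trans le_sup_left)
      ((inf_le_inf inf_le_left inf_le_left).trans le_sup_right)
    refine le_trans ?_ (Submodule.orthogonal_le h1)
    rw [← Submodule.inf_orthogonal]
    refine inf_le_inf inf_le_left ?_
    refine le_trans (sup_le_sup inf_le_left inf_le_left) ?_
    exact sup_le (Submodule.orthogonal_le inf_le_left) (Submodule.orthogonal_le inf_le_right)
  have key : finrank ℂ (Aᗮ ⊓ B : Submodule ℂ E) + finrank ℂ A = finrank ℂ B :=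
    finrank_inf_orthogonal_add hAB
  -- modular lattice dimension arithmetic
  have m1 := Submodule.finrank_sup_add_finrank_inf_eq P Q
  have m2 := Submodule.finrank_sup_add_finrank_inf_eq P R
  have m3 := Submodule.finrank_sup_add_finrank_inf_eq Q R
  have m4 := Submodule.finrank_sup_add_finrank_inf_eq (P ⊔ Q) (P ⊔ R)
  have e4 : (P ⊔ Q) ⊔ (P ⊔ R) = P ⊔ Q ⊔ R := by
    rw [sup_sup_sup_comm, sup_idem, sup_assoc]
  rw [e4] at m4
  have m5 := Submodule.finrank_sup_add_finrank_inf_eq P (Q ⊓ R)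
  have e5 : P ⊓ (Q ⊓ R) = P ⊓ Q ⊓ R := (inf_assoc P Q R).symm
  rw [e5] at m5
  have m6 := Submodule.finrank_sup_add_finrank_inf_eq (Q ⊔ R) P
  have e6 : (Q ⊔ R) ⊔ P = P ⊔ Q ⊔ R := by rw [sup_comm, ← sup_assoc]
  rw [e6] at m6
  have m7 := Submodule.finrank_sup_add_finrank_inf_eq (Q ⊓ P) (R ⊓ P)
  have e7 : (Q ⊓ P) ⊓ (R ⊓ P) = P ⊓ Q ⊓ R :=
    le_antisymm
      (le_inf (le_inf (inf_le_left.trans inf_le_right) (inf_le_left.trans inf_le_left))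
        (inf_le_right.trans inf_le_left))
      (le_inf (le_inf (inf_le_left.trans inf_le_right) (inf_le_left.trans inf_le_left))
        (le_inf inf_le_right (inf_le_left.trans inf_le_left)))
  rw [e7] at m7
  -- inequalities
  have i1 : finrank ℂ ↥((Q ⊓ P) ⊔ (R ⊓ P)) ≤ finrank ℂ ↥((Q ⊔ R) ⊓ P) :=
    Submodule.finrank_mono (sup_le (inf_le_inf le_sup_left le_rfl)
      (inf_le_inf le_sup_right le_rfl))
  have i2 : finrank ℂ ↥((Q ⊔ R) ⊓ P) ≤ finrank ℂ ↥P := Submodule.finrank_mono inf_le_right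
  have i3 : finrank ℂ ↥B ≤ finrank ℂ ↥γ :=
    Submodule.finrank_mono (inf_le_left.trans (sup_le inf_le_right inf_le_right))
  have i4 : finrank ℂ ↥P ≤ finrank ℂ ↥A := Submodule.finrank_mono le_sup_left
  have i5 := Submodule.finrank_mono hres
  rw [← hB] at m4
  rw [← hA] at m5
  have c1 : finrank ℂ ↥(Q ⊓ P) = finrank ℂ ↥(P ⊓ Q) := by rw [inf_comm]
  have c2 : finrank ℂ ↥(R ⊓ P) = finrank ℂ ↥(P ⊓ R) := by rw [inf_comm]
  omega

lemma two_mul_finrank_distribTestRes_le (γ p q r : Submodule ℂ E) :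
    2 * finrank ℂ (distribTestRes γ p q r) ≤ finrank ℂ γ :=
  two_mul_finrank_distribTestRes_le' γ p q r

lemma distribTest_le_distribTestRes_top (p q r : Submodule ℂ E) :
    distribTest p q r ≤ distribTestRes ⊤ p q r := by
  have hab : p ⊔ q ⊓ r ≤ (p ⊔ q) ⊓ (p ⊔ r) := sup_le (le_inf le_sup_left le_sup_left)
    (le_inf (le_sup_of_le_right inf_le_left) (le_sup_of_le_right inf_le_right))
  have hqr : (q ⊓ r)ᗮ = qᗮ ⊔ rᗮ := by
    conv_lhs => rw [← Submodule.orthogonal_orthogonal q, ← Submodule.orthogonal_orthogonal r,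
      Submodule.inf_orthogonal, Submodule.orthogonal_orthogonal]
  simp only [distribTest, distribTestRes, inf_top_eq]
  refine inf_le_inf (sup_le hab le_rfl) ?_
  refine le_trans (sup_le le_rfl (Submodule.orthogonal_le hab)) ?_
  rw [← Submodule.inf_orthogonal, hqr]

lemma pow_two_mul_finrank_distribTestIter_le_finrank
    (p q r : ℕ → Submodule ℂ E) (k : ℕ) :
    2 ^ (k + 1) * finrank ℂ (distribTestIter p q r k) ≤ finrank ℂ E := by
  induction k with
  | zero =>
    have h1 : finrank ℂ (distribTestIter p q r 0) ≤
        finrank ℂ (distribTestRes ⊤ (p 1) (q 1) (r 1)) :=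
      Submodule.finrank_mono (distribTest_le_distribTestRes_top (p 1) (q 1) (r 1))
    have h2 := two_mul_finrank_distribTestRes_le (⊤ : Submodule ℂ E) (p 1) (q 1) (r 1)
    have h3 : finrank ℂ ↥(⊤ : Submodule ℂ E) = finrank ℂ E := finrank_top ℂ E
    simpa using le_trans (Nat.mul_le_mul_left 2 h1) (by omega)
  | succ k ih =>
    have h2 := two_mul_finrank_distribTestRes_le (distribTestIter p q r k)
      (p (k + 2)) (q (k + 2)) (r (k + 2))
    calc 2 ^ (k + 2) * finrank ℂ (distribTestIter p q r (k + 1))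
        = 2 ^ (k + 1) * (2 * finrank ℂ
            (distribTestRes (distribTestIter p q r k) (p (k + 2)) (q (k + 2)) (r (k + 2)))) := by
          rw [distribTestIter]; ring
      _ ≤ 2 ^ (k + 1) * finrank ℂ (distribTestIter p q r k) := Nat.mul_le_mul_left _ h2
      _ ≤ finrank ℂ E := ih

end Aux

theorem pow_two_mul_finrank_distribTestIter_le
    {E : Type*} [NormedAddCommGroup E] [InnerProductSpace ℂ E]
    [FiniteDimensional ℂ E] (n : ℕ) (hn : Module.finrank ℂ E = n)
    (p q r : ℕ → Submodule ℂ E) (m : ℕ) (hm : 1 ≤ m) :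
    2 ^ m * Module.finrank ℂ (distribTestIter p q r (m - 1)) ≤ n := by
  obtain ⟨k, rfl⟩ : ∃ k, m = k + 1 := ⟨m - 1, (Nat.succ_pred_eq_of_pos hm).symm⟩
  subst hn
  simpa using pow_two_mul_finrank_distribTestIter_le_finrank p q r k
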